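/- Let n ≥ 1 and x₀, v₀, x₁, v₁ ∈ ℝⁿ. If a C² curve γ : [0,1] → ℝⁿ satisfies the Hermite boundary conditions γ(0) = x₀, γ'(0) = v₀, γ(1) = x₁, γ'(1) = v₁ and attains the minimal acceleration energy, i.e., ∫₀¹ ‖γ''(t)‖² dt = 12‖x₁ − x₀ − v₀‖² − 12⟨x₁ − x₀ − v₀, v₁ − v₀⟩ + 4‖v₁ − v₀‖², then γ equals the cubic polynomial p(t) = x₀ + t v₀ + t²(3(x₁ − x₀) − 2v₀ − v₁) + t³(v₀ + v₁ − 2(x₁ − x₀)) for all t ∈ [0,1]; in particular the minimizer of the acceleration energy subject to the Hermite boundary conditions is unique. -/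

import Mathlib

open Set MeasureTheory intervalIntegral
open scoped InnerProductSpace

private lemma contOn_II {f : ℝ → ℝ} (h : ContinuousOn f (Icc (0:ℝ) 1)) :
    IntervalIntegrable f volume 0 1 := by
  apply ContinuousOn.intervalIntegrable
  rwa [uIcc_of_le zero_le_one]

/-- Uniqueness of the minimizer of the acceleration energy: if a `C²` curve `γ : [0,1] → ℝⁿ`
satisfies the Hermite boundary conditions and attains the minimal acceleration energy
`12‖x₁ − x₀ − v₀‖² − 12⟨x₁ − x₀ − v₀, v₁ − v₀⟩ + 4‖v₁ − v₀‖²`, then `γ` equals the cubic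
Hermite polynomial `p(t) = x₀ + t v₀ + t²(3(x₁ − x₀) − 2v₀ − v₁) + t³(v₀ + v₁ − 2(x₁ − x₀))`
on `[0,1]`. -/
theorem acceleration_energy_minimizer_unique (n : ℕ) (hn : 1 ≤ n)
    (x₀ v₀ x₁ v₁ : EuclideanSpace ℝ (Fin n))
    (γ : ℝ → EuclideanSpace ℝ (Fin n))
    (hγ : ContDiffOn ℝ 2 γ (Icc (0:ℝ) 1))
    (h0 : γ 0 = x₀) (h0' : derivWithin γ (Icc (0:ℝ) 1) 0 = v₀)
    (h1 : γ 1 = x₁) (h1' : derivWithin γ (Icc (0:ℝ) 1) 1 = v₁)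
    (hmin : (∫ t in (0:ℝ)..1,
        ‖derivWithin (derivWithin γ (Icc (0:ℝ) 1)) (Icc (0:ℝ) 1) t‖^2)
      = 12 * ‖x₁ - x₀ - v₀‖^2 - 12 * ⟪x₁ - x₀ - v₀, v₁ - v₀⟫_ℝ + 4 * ‖v₁ - v₀‖^2) :
    ∀ t ∈ Icc (0:ℝ) 1,
      γ t = x₀ + t • v₀
        + (t^2) • ((3:ℝ) • (x₁ - x₀) - (2:ℝ) • v₀ - v₁)
        + (t^3) • (v₀ + v₁ - (2:ℝ) • (x₁ - x₀)) := by
  have hIu : UniqueDiffOn ℝ (Icc (0:ℝ) 1) := uniqueDiffOn_Icc zero_lt_one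
  set g1 : ℝ → EuclideanSpace ℝ (Fin n) := derivWithin γ (Icc (0:ℝ) 1) with hg1
  set g2 : ℝ → EuclideanSpace ℝ (Fin n) := derivWithin g1 (Icc (0:ℝ) 1) with hg2
  set a : EuclideanSpace ℝ (Fin n) :=
    (6:ℝ) • (x₁ - x₀) - (4:ℝ) • v₀ - (2:ℝ) • v₁ with ha
  set b : EuclideanSpace ℝ (Fin n) :=
    (6:ℝ) • v₀ + (6:ℝ) • v₁ - (12:ℝ) • (x₁ - x₀) with hb
  -- smoothness facts
  have hγ1 : ContDiffOn ℝ 1 g1 (Icc (0:ℝ) 1) := hγ.derivWithin hIu (by norm_num)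
  have hγ1cont : ContinuousOn g1 (Icc (0:ℝ) 1) := hγ1.continuousOn
  have hγ2cont : ContinuousOn g2 (Icc (0:ℝ) 1) :=
    (hγ1.derivWithin (m := 0) hIu (by norm_num)).continuousOn
  have hγcont : ContinuousOn γ (Icc (0:ℝ) 1) := hγ.continuousOn
  have hγdiff : ∀ s ∈ Icc (0:ℝ) 1, HasDerivWithinAt γ (g1 s) (Icc (0:ℝ) 1) s := fun s hs =>
    (hγ.differentiableOn (by norm_num) s hs).hasDerivWithinAt
  have hγ1diff : ∀ s ∈ Icc (0:ℝ) 1, HasDerivWithinAt g1 (g2 s) (Icc (0:ℝ) 1) s := fun s hs =>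
    (hγ1.differentiableOn (by norm_num) s hs).hasDerivWithinAt
  have hmemIoo : ∀ s ∈ Ioo (0:ℝ) 1, Icc (0:ℝ) 1 ∈ nhds s := fun s hs =>
    Icc_mem_nhds hs.1 hs.2
  have hγ1at : ∀ s ∈ Ioo (0:ℝ) 1, HasDerivAt g1 (g2 s) s := fun s hs =>
    (hγ1diff s (Ioo_subset_Icc_self hs)).hasDerivAt (hmemIoo s hs)
  have hγat : ∀ s ∈ Ioo (0:ℝ) 1, HasDerivAt γ (g1 s) s := fun s hs =>
    (hγdiff s (Ioo_subset_Icc_self hs)).hasDerivAt (hmemIoo s hs)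
  have hqcont : Continuous fun s : ℝ => a + s • b :=
    continuous_const.add (continuous_id.smul continuous_const)
  -- IBP 1 : ∫ (⟪g1 s, b⟫ + ⟪g2 s, a + s•b⟫) = ⟪v₁, a+b⟫ - ⟪v₀, a⟫
  have hcont1 : ContinuousOn (fun s => ⟪g1 s, b⟫_ℝ + ⟪g2 s, a + s • b⟫_ℝ) (Icc (0:ℝ) 1) :=
    (hγ1cont.inner continuousOn_const).add (hγ2cont.inner hqcont.continuousOn)
  have hIBP1 : (∫ s in (0:ℝ)..1, (⟪g1 s, b⟫_ℝ + ⟪g2 s, a + s • b⟫_ℝ))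
      = ⟪v₁, a + b⟫_ℝ - ⟪v₀, a⟫_ℝ := by
    have hder : ∀ s ∈ Ioo (0:ℝ) 1,
        HasDerivWithinAt (fun u => ⟪g1 u, a + u • b⟫_ℝ)
          (⟪g1 s, b⟫_ℝ + ⟪g2 s, a + s • b⟫_ℝ) (Ioi s) s := by
      intro s hs
      have h2 : HasDerivAt (fun u : ℝ => a + u • b) b s := by
        simpa using ((hasDerivAt_id s).smul_const b).const_add a
      exact ((HasDerivAt.inner ℝ (hγ1at s hs) h2)).hasDerivWithinAt
    have := integral_eq_sub_of_hasDeriv_right_of_le zero_le_one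
      (hγ1cont.inner hqcont.continuousOn) hder (contOn_II hcont1)
    simpa [h0', h1'] using this
  -- IBP 2 : ∫ ⟪g1 s, b⟫ = ⟪x₁, b⟫ - ⟪x₀, b⟫
  have hcont2 : ContinuousOn (fun s => ⟪g1 s, b⟫_ℝ) (Icc (0:ℝ) 1) :=
    hγ1cont.inner continuousOn_const
  have hIBP2 : (∫ s in (0:ℝ)..1, ⟪g1 s, b⟫_ℝ) = ⟪x₁, b⟫_ℝ - ⟪x₀, b⟫_ℝ := by
    have hder : ∀ s ∈ Ioo (0:ℝ) 1,
        HasDerivWithinAt (fun u => ⟪γ u, b⟫_ℝ) (⟪g1 s, b⟫_ℝ) (Ioi s) s := by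
      intro s hs
      have := HasDerivAt.inner ℝ (hγat s hs) (hasDerivAt_const s b)
      simpa using this.hasDerivWithinAt
    have := integral_eq_sub_of_hasDeriv_right_of_le zero_le_one
      (hγcont.inner continuousOn_const) hder (contOn_II hcont2)
    simpa [h0, h1] using this
  have hcont3 : ContinuousOn (fun s => ⟪g2 s, a + s • b⟫_ℝ) (Icc (0:ℝ) 1) :=
    hγ2cont.inner hqcont.continuousOn
  have hcross : (∫ s in (0:ℝ)..1, ⟪g2 s, a + s • b⟫_ℝ)
      = ⟪v₁, a + b⟫_ℝ - ⟪v₀, a⟫_ℝ - (⟪x₁, b⟫_ℝ - ⟪x₀, b⟫_ℝ) := by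
    have hsum := integral_add (contOn_II hcont2) (contOn_II hcont3)
    rw [hIBP1, hIBP2] at hsum
    linarith
  -- value of ∫ ‖a + s•b‖²
  have hqsq : ∀ s : ℝ, ‖a + s • b‖^2 = ‖a‖^2 + (2 * ⟪a, b⟫_ℝ) * s + ‖b‖^2 * s^2 := by
    intro s
    rw [norm_add_sq_real, inner_smul_right, norm_smul]
    simp [Real.norm_eq_abs, mul_pow, sq_abs]
    ring
  have hqint : (∫ s in (0:ℝ)..1, ‖a + s • b‖^2)
      = ‖a‖^2 + ⟪a, b⟫_ℝ + ‖b‖^2 / 3 := by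
    have : (∫ s in (0:ℝ)..1, ‖a + s • b‖^2)
        = ∫ s in (0:ℝ)..1, (‖a‖^2 + (2 * ⟪a, b⟫_ℝ) * s + ‖b‖^2 * s^2) := by
      exact intervalIntegral.integral_congr fun s _ => hqsq s
    rw [this]
    have i0 : IntervalIntegrable (fun _ : ℝ => ‖a‖^2) volume 0 1 := intervalIntegrable_const
    have i1 : IntervalIntegrable (fun s : ℝ => (2 * ⟪a, b⟫_ℝ) * s) volume 0 1 := by
      apply Continuous.intervalIntegrable; fun_prop
    have i2 : IntervalIntegrable (fun s : ℝ => ‖b‖^2 * s^2) volume 0 1 := by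
      apply Continuous.intervalIntegrable; fun_prop
    rw [integral_add (i0.add i1) i2, integral_add i0 i1,
      intervalIntegral.integral_const, intervalIntegral.integral_const_mul,
      intervalIntegral.integral_const_mul]
    simp [integral_id, integral_pow]
    ring
  -- continuity of ‖g2 s - (a + s•b)‖²
  have hdcont : ContinuousOn (fun s => ‖g2 s - (a + s • b)‖^2) (Icc (0:ℝ) 1) :=
    ((hγ2cont.sub hqcont.continuousOn).norm.pow 2)
  -- the integral of ‖g2 - q‖² is zero
  have hzero : (∫ s in (0:ℝ)..1, ‖g2 s - (a + s • b)‖^2) = 0 := by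
    have hexp : ∀ s : ℝ, ‖g2 s - (a + s • b)‖^2
        = ‖g2 s‖^2 - 2 * ⟪g2 s, a + s • b⟫_ℝ + ‖a + s • b‖^2 := fun s =>
      norm_sub_sq_real _ _
    have hng2 : ContinuousOn (fun s => ‖g2 s‖^2) (Icc (0:ℝ) 1) := hγ2cont.norm.pow 2
    have hnq : ContinuousOn (fun s => ‖a + s • b‖^2) (Icc (0:ℝ) 1) :=
      (hqcont.norm.pow 2).continuousOn
    have e1 : (∫ s in (0:ℝ)..1, ‖g2 s - (a + s • b)‖^2)
        = (∫ s in (0:ℝ)..1, (‖g2 s‖^2 - 2 * ⟪g2 s, a + s • b⟫_ℝ))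
          + ∫ s in (0:ℝ)..1, ‖a + s • b‖^2 := by
      rw [← integral_add
        (IntervalIntegrable.sub (contOn_II hng2)
          (by simpa using (contOn_II hcont3).const_mul 2)) (contOn_II hnq)]
      exact intervalIntegral.integral_congr fun s _ => hexp s
    rw [e1, integral_sub (contOn_II hng2) (by simpa using (contOn_II hcont3).const_mul 2),
      intervalIntegral.integral_const_mul, hqint, hcross, hmin]
    simp only [ha, hb]
    simp only [← real_inner_self_eq_norm_sq, inner_sub_left, inner_sub_right, inner_add_left,
      inner_add_right, inner_smul_left, inner_smul_right, RCLike.ofReal_real_eq_id, id_eq,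
      conj_trivial]
    simp only [real_inner_comm x₁ x₀, real_inner_comm v₀ x₀, real_inner_comm v₀ x₁,
      real_inner_comm v₁ x₀, real_inner_comm v₁ x₁, real_inner_comm v₁ v₀]
    ring
  -- hence g2 s = a + s•b on [0,1]
  have hg2eq : ∀ s ∈ Icc (0:ℝ) 1, g2 s = a + s • b := by
    intro s hs
    by_contra hne
    have hpos : 0 < ∫ s in (0:ℝ)..1, ‖g2 s - (a + s • b)‖^2 := by
      apply intervalIntegral.integral_pos zero_lt_one hdcont (fun x _ => sq_nonneg _)
      exact ⟨s, hs, pow_pos (norm_pos_iff.mpr (sub_ne_zero.mpr hne)) 2⟩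
    rw [hzero] at hpos
    exact lt_irrefl 0 hpos
  -- first integration: g1 = p1 on [0,1]
  have hmemIci : ∀ x ∈ Ico (0:ℝ) 1, Icc (0:ℝ) 1 ∈ nhdsWithin x (Ici x) := by
    intro x hx
    exact mem_nhdsWithin.mpr ⟨Iio 1, isOpen_Iio, hx.2,
      fun y hy => ⟨hx.1.trans hy.2, hy.1.le⟩⟩
  have hp1at : ∀ x : ℝ,
      HasDerivAt (fun s : ℝ => v₀ + s • a + (s^2/2) • b) (a + x • b) x := by
    intro x
    have h1 : HasDerivAt (fun s : ℝ => s • a) a x := by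
      simpa using (hasDerivAt_id x).smul_const a
    have h2 : HasDerivAt (fun s : ℝ => (s^2/2) • b) (x • b) x := by
      have := ((hasDerivAt_pow 2 x).div_const 2).smul_const b
      refine this.congr_deriv ?_
      congr 1; push_cast; ring
    exact (h1.const_add v₀).add h2
  have heq1 : ∀ y ∈ Icc (0:ℝ) 1, g1 y = v₀ + y • a + (y^2/2) • b := by
    apply eq_of_has_deriv_right_eq (f' := fun s => a + s • b)
    · intro x hx
      have := (hγ1diff x (Ico_subset_Icc_self hx)).mono_of_mem_nhdsWithin (hmemIci x hx)
      rwa [hg2eq x (Ico_subset_Icc_self hx)] at this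
    · intro x hx
      exact (hp1at x).hasDerivWithinAt
    · exact hγ1cont
    · exact Continuous.continuousOn (by fun_prop)
    · simp [h0']
  -- second integration: γ = p on [0,1]
  have hpat : ∀ x : ℝ,
      HasDerivAt (fun s : ℝ => x₀ + s • v₀ + (s^2/2) • a + (s^3/6) • b)
        (v₀ + x • a + (x^2/2) • b) x := by
    intro x
    have h1 : HasDerivAt (fun s : ℝ => s • v₀) v₀ x := by
      simpa using (hasDerivAt_id x).smul_const v₀
    have h2 : HasDerivAt (fun s : ℝ => (s^2/2) • a) (x • a) x := by
      have := ((hasDerivAt_pow 2 x).div_const 2).smul_const a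
      refine this.congr_deriv ?_
      congr 1; push_cast; ring
    have h3 : HasDerivAt (fun s : ℝ => (s^3/6) • b) ((x^2/2) • b) x := by
      have := ((hasDerivAt_pow 3 x).div_const 6).smul_const b
      refine this.congr_deriv ?_
      congr 1; push_cast; ring
    exact (((h1.const_add x₀).add h2).add h3)
  have heq2 : ∀ y ∈ Icc (0:ℝ) 1,
      γ y = x₀ + y • v₀ + (y^2/2) • a + (y^3/6) • b := by
    apply eq_of_has_deriv_right_eq (f' := fun s => v₀ + s • a + (s^2/2) • b)
    · intro x hx
      have := (hγdiff x (Ico_subset_Icc_self hx)).mono_of_mem_nhdsWithin (hmemIci x hx)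
      rwa [heq1 x (Ico_subset_Icc_self hx)] at this
    · intro x hx
      exact (hpat x).hasDerivWithinAt
    · exact hγcont
    · exact Continuous.continuousOn (by fun_prop)
    · simp [h0]
  intro t ht
  rw [heq2 t ht, ha, hb]
  module
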